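/- Let M be a finite-dimensional von Neumann algebra (finite-dimensional C*-algebra) acting on a finite-dimensional Hilbert space H, and let S ⊆ B(H) be an M′-bimodule (quantum graph). Then S is reflexive (M′ ⊆ S) if and only if every z ∈ M ⊗ M in the annihilator Ann(S) satisfies m(z) = 0, where m : M ⊗ M → M is the multiplication map, m(x ⊗ y) = xy. -/

import Mathlib

open TensorProduct Matrix

set_option synthInstance.maxHeartbeats 1000000
set_option maxHeartbeats 1000000

/-- The map `Φ` sending `x ⊗ y ∈ M ⊗ M` (for a subalgebra `M ⊆ B(H)`) to the
operator `T ↦ x T y` on `B(H)`. -/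
noncomputable def PhiM {n : Type*} [Fintype n] [DecidableEq n]
    (M : Subalgebra ℂ (Matrix n n ℂ)) :
    (↥M ⊗[ℂ] ↥M) →ₗ[ℂ] Matrix n n ℂ →ₗ[ℂ] Matrix n n ℂ :=
  TensorProduct.lift
  { toFun := fun x =>
      { toFun := fun y =>
          (LinearMap.mulLeft ℂ (x : Matrix n n ℂ)).comp
            (LinearMap.mulRight ℂ (y : Matrix n n ℂ))
        map_add' := fun y₁ y₂ => by
          ext T
          simp [Matrix.mul_add]
        map_smul' := fun c y => by
          ext T
          simp [Matrix.mul_smul] }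
    map_add' := fun x₁ x₂ => by
      ext y T
      simp [Matrix.add_mul]
    map_smul' := fun c x => by
      ext y T
      simp [smul_mul_assoc] }

section Aux

variable {n : Type*} [Fintype n] [DecidableEq n]

/-- transport of matrices to Euclidean space -/
noncomputable def eE : Matrix n n ℂ ≃ₗ[ℂ] EuclideanSpace ℂ (n × n) :=
  (LinearEquiv.curry ℂ ℂ n n).symm.trans (WithLp.linearEquiv 2 ℂ ((n × n) → ℂ)).symm

omit [DecidableEq n] in
lemma inner_eE (A B : Matrix n n ℂ) :
    (inner ℂ (eE A) (eE B) : ℂ) = Matrix.trace (Aᴴ * B) := by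
  have h : (inner ℂ (eE A) (eE B) : ℂ) = ∑ p : n × n, (starRingEnd ℂ) (A p.1 p.2) * B p.1 p.2 := by
    simp [eE, PiLp.inner_apply, RCLike.inner_apply, LinearEquiv.curry]
    refine Finset.sum_congr rfl fun p _ => ?_
    rw [mul_comm]
    rfl
  rw [h, Matrix.trace, Fintype.sum_prod_type]
  simp only [Matrix.diag_apply, Matrix.mul_apply, Matrix.conjTranspose_apply]
  rw [Finset.sum_comm]
  exact Finset.sum_congr rfl fun i _ => Finset.sum_congr rfl fun j _ => by
    rw [starRingEnd_apply, mul_comm]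

omit [DecidableEq n] in
lemma inner_adj (a b x y : Matrix n n ℂ) :
    (inner ℂ (eE (aᴴ * x * bᴴ)) (eE y) : ℂ) = inner ℂ (eE x) (eE (a * y * b)) := by
  rw [inner_eE, inner_eE]
  simp only [Matrix.conjTranspose_mul, Matrix.conjTranspose_conjTranspose]
  rw [show b * (xᴴ * a) * y = b * (xᴴ * a * y) from by noncomm_ring,
    Matrix.trace_mul_comm, show xᴴ * a * y * b = xᴴ * (a * y * b) from by noncomm_ring]

/-- existence of an equivariant projection onto any subspace of matrix space -/
theorem exists_proj (W : Submodule ℂ (Matrix n n ℂ)) :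
    ∃ p : Matrix n n ℂ →ₗ[ℂ] Matrix n n ℂ,
      (∀ x, p x ∈ W) ∧ (∀ w ∈ W, p w = w) ∧
      ∀ a b : Matrix n n ℂ, (∀ w ∈ W, a * w * b ∈ W) → (∀ w ∈ W, aᴴ * w * bᴴ ∈ W) →
        ∀ x, p (a * x * b) = a * p x * b := by
  classical
  set W' : Submodule ℂ (EuclideanSpace ℂ (n × n)) := W.map (eE.toLinearMap) with hW'
  set P : Matrix n n ℂ →ₗ[ℂ] Matrix n n ℂ :=
    (eE.symm.toLinearMap.comp ((W'.subtype.comp (W'.orthogonalProjection).toLinearMap).comp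
      eE.toLinearMap)) with hP
  have hmemW' : ∀ A : Matrix n n ℂ, A ∈ W ↔ eE A ∈ W' := by
    intro A
    constructor
    · intro h; exact ⟨A, h, rfl⟩
    · rintro ⟨B, hB, hBA⟩
      rwa [← eE.injective hBA]
  have hPval : ∀ x, eE (P x) = (W'.orthogonalProjection (eE x) : EuclideanSpace ℂ (n × n)) := by
    intro x; simp [hP]
  have h1 : ∀ x, P x ∈ W := by
    intro x
    rw [hmemW', hPval]
    exact (W'.orthogonalProjection (eE x)).2
  have h2 : ∀ w ∈ W, P w = w := by
    intro w hw
    have h : (W'.orthogonalProjection (eE w) : EuclideanSpace ℂ (n × n)) = eE w :=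
      Submodule.starProjection_eq_self_iff.2 ((hmemW' w).1 hw)
    apply eE.injective
    rw [hPval, h]
  refine ⟨P, h1, h2, ?_⟩
  intro a b hab hab' x
  apply eE.injective
  rw [hPval]
  suffices key : W'.starProjection (eE (a * x * b)) = eE (a * P x * b) from key
  apply Submodule.eq_starProjection_of_mem_orthogonal
  · exact (hmemW' _).1 (hab _ (h1 x))
  · rw [Submodule.mem_orthogonal]
    intro u hu
    obtain ⟨w, hw, rfl⟩ : ∃ w ∈ W, eE w = u := by
      rcases hu with ⟨w, hw, rfl⟩; exact ⟨w, hw, rfl⟩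
    have hdiff : eE (a * x * b) - eE (a * P x * b) = eE (a * (x - P x) * b) := by
      rw [← map_sub]; congr 1; noncomm_ring
    rw [hdiff, ← inner_adj a b]
    have horth : eE (x - P x) ∈ W'ᗮ := by
      rw [map_sub, hPval]
      exact Submodule.sub_starProjection_mem_orthogonal (eE x)
    exact (Submodule.mem_orthogonal W' _).1 horth _ ((hmemW' _).1 (hab' _ hw))

/-- left blocks of an endomorphism of matrix space -/
noncomputable def blk (Q : Matrix n n ℂ →ₗ[ℂ] Matrix n n ℂ) (l l' : n) : Matrix n n ℂ :=
  Matrix.of fun i i' => Q (single i' l' 1) i l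

/-- right blocks of an endomorphism of matrix space -/
noncomputable def blkR (Q : Matrix n n ℂ →ₗ[ℂ] Matrix n n ℂ) (i j : n) : Matrix n n ℂ :=
  Matrix.of fun k l => Q (single j k 1) i l

lemma mul_stdBasisMatrix_eq (a : Matrix n n ℂ) (i' l' : n) :
    a * single i' l' 1 = ∑ m, a m i' • single m l' (1:ℂ) := by
  ext p q
  rw [Matrix.mul_apply, Matrix.sum_apply]
  by_cases h : l' = q <;>
    simp [Matrix.single, ite_and, h, Finset.sum_ite_eq, Finset.sum_ite_eq']

lemma stdBasisMatrix_mul_eq (b : Matrix n n ℂ) (j k : n) :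
    single j k (1:ℂ) * b = ∑ m, b k m • single j m (1:ℂ) := by
  ext p q
  rw [Matrix.mul_apply, Matrix.sum_apply]
  by_cases h : j = p <;>
    simp [Matrix.single, ite_and, h, Finset.sum_ite_eq, Finset.sum_ite_eq']

lemma matrix_decomp (x : Matrix n n ℂ) :
    x = ∑ i', ∑ l', x i' l' • single i' l' (1:ℂ) := by
  conv_lhs => rw [matrix_eq_sum_single x]
  refine Finset.sum_congr rfl fun i' _ => Finset.sum_congr rfl fun l' _ => ?_
  rw [smul_single, smul_eq_mul, mul_one]

lemma e1 (Q : Matrix n n ℂ →ₗ[ℂ] Matrix n n ℂ) (a : Matrix n n ℂ) (l l' i i' : n) :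
    (a * blk Q l l') i i' = (a * Q (single i' l' 1)) i l := by
  simp [blk, Matrix.mul_apply]

lemma e2 (Q : Matrix n n ℂ →ₗ[ℂ] Matrix n n ℂ) (a : Matrix n n ℂ) (l l' i i' : n) :
    (blk Q l l' * a) i i' = (Q (a * single i' l' 1)) i l := by
  rw [mul_stdBasisMatrix_eq, map_sum]
  simp only [LinearMap.map_smul, Finset.sum_apply, Matrix.sum_apply, Matrix.smul_apply,
    smul_eq_mul]
  rw [Matrix.mul_apply]
  exact Finset.sum_congr rfl fun m _ => by simp [blk, mul_comm]

lemma comm_iff (Q : Matrix n n ℂ →ₗ[ℂ] Matrix n n ℂ) (a : Matrix n n ℂ) :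
    (∀ x, a * Q x = Q (a * x)) ↔ ∀ l l', a * blk Q l l' = blk Q l l' * a := by
  constructor
  · intro h l l'
    ext i i'
    rw [e1, e2, h]
  · intro h x
    have hbasis : ∀ i' l', a * Q (single i' l' 1) = Q (a * single i' l' 1) := by
      intro i' l'
      ext i l
      rw [← e1, h l l', e2]
    conv_lhs => rw [matrix_decomp x]
    conv_rhs => rw [matrix_decomp x]
    simp only [map_sum, Finset.mul_sum, LinearMap.map_smul, Matrix.mul_smul]
    exact Finset.sum_congr rfl fun i' _ => Finset.sum_congr rfl fun l' _ => by rw [hbasis]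

lemma e1R (Q : Matrix n n ℂ →ₗ[ℂ] Matrix n n ℂ) (b : Matrix n n ℂ) (i j k l : n) :
    (blkR Q i j * b) k l = (Q (single j k 1) * b) i l := by
  simp [blkR, Matrix.mul_apply]

lemma e2R (Q : Matrix n n ℂ →ₗ[ℂ] Matrix n n ℂ) (b : Matrix n n ℂ) (i j k l : n) :
    (b * blkR Q i j) k l = (Q (single j k 1 * b)) i l := by
  rw [stdBasisMatrix_mul_eq, map_sum]
  simp only [LinearMap.map_smul, Finset.sum_apply, Matrix.sum_apply, Matrix.smul_apply,
    smul_eq_mul]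
  rw [Matrix.mul_apply]
  exact Finset.sum_congr rfl fun m _ => by simp [blkR]

lemma comm_iffR (Q : Matrix n n ℂ →ₗ[ℂ] Matrix n n ℂ) (b : Matrix n n ℂ) :
    (∀ x, Q x * b = Q (x * b)) ↔ ∀ i j, b * blkR Q i j = blkR Q i j * b := by
  constructor
  · intro h i j
    ext k l
    rw [e1R, e2R, h]
  · intro h x
    have hbasis : ∀ j k, Q (single j k 1) * b = Q (single j k 1 * b) := by
      intro j k
      ext i l
      rw [← e1R, ← h i j, e2R]
    conv_lhs => rw [matrix_decomp x]
    conv_rhs => rw [matrix_decomp x]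
    simp only [map_sum, Finset.sum_mul, LinearMap.map_smul, smul_mul_assoc, Matrix.smul_mul]
    exact Finset.sum_congr rfl fun j _ => Finset.sum_congr rfl fun k _ => by rw [hbasis]

lemma claim3 (Q : Matrix n n ℂ →ₗ[ℂ] Matrix n n ℂ) (T : Matrix n n ℂ) :
    Q T = ∑ i, ∑ j, single i j (1:ℂ) * T * blkR Q i j := by
  ext p q
  conv_lhs => rw [matrix_decomp T]
  rw [map_sum]
  simp only [map_sum, LinearMap.map_smul, Matrix.sum_apply, Matrix.smul_apply, smul_eq_mul]
  have hR : ∀ i j, (single i j (1:ℂ) * T * blkR Q i j) p q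
      = (if p = i then ∑ m, T j m * Q (single j m 1) p q else 0) := by
    intro i j
    by_cases h : p = i
    · subst h
      rw [Matrix.mul_apply, if_pos rfl]
      refine Finset.sum_congr rfl fun m _ => ?_
      rw [Matrix.single_mul_apply_same, one_mul]
      rfl
    · rw [if_neg h, Matrix.mul_apply]
      apply Finset.sum_eq_zero
      intro m _
      rw [Matrix.single_mul_apply_of_ne (1:ℂ) i j p m h T]
      exact zero_mul _
  refine Eq.symm ?_
  rw [Finset.sum_comm]
  refine Finset.sum_congr rfl fun j _ => ?_
  rw [Finset.sum_congr rfl fun i _ => hR i j, Finset.sum_ite_eq]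
  simp

omit [DecidableEq n] in
lemma sum_swap4 {β : Type*} [AddCommMonoid β] (G : n → n → n → n → β) :
    ∑ k, ∑ l, ∑ i, ∑ j, G k l i j = ∑ i, ∑ j, ∑ k, ∑ l, G k l i j := by
  have key : ∀ (H : n → n → n → n → β),
      (∑ p : n × n, ∑ q : n × n, H p.1 p.2 q.1 q.2) = ∑ k, ∑ l, ∑ i, ∑ j, H k l i j := by
    intro H
    rw [Fintype.sum_prod_type]
    exact Finset.sum_congr rfl fun k _ => Finset.sum_congr rfl fun l _ =>
      Fintype.sum_prod_type _
  rw [← key G, ← key (fun i j k l => G k l i j), Finset.sum_comm]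

lemma claim4 (Q π : Matrix n n ℂ →ₗ[ℂ] Matrix n n ℂ) (T : Matrix n n ℂ) :
    ∑ k, ∑ l, blk Q l k * T * π (single k l 1)
      = ∑ i, ∑ j, single i j (1:ℂ) * T * π (blkR Q i j) := by
  have hL : ∀ k l, blk Q l k * T * π (single k l 1)
      = ∑ i, ∑ j, Q (single j k 1) i l •
          (single i j (1:ℂ) * T * π (single k l 1)) := by
    intro k l
    conv_lhs => rw [matrix_decomp (blk Q l k)]
    simp only [Finset.sum_mul, Matrix.smul_mul, blk, Matrix.of_apply]
  have hR : ∀ i j, single i j (1:ℂ) * T * π (blkR Q i j)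
      = ∑ k, ∑ l, Q (single j k 1) i l •
          (single i j (1:ℂ) * T * π (single k l 1)) := by
    intro i j
    conv_lhs => rw [matrix_decomp (blkR Q i j)]
    simp only [map_sum, LinearMap.map_smul, Finset.mul_sum, Matrix.mul_smul, blkR,
      Matrix.of_apply]
  simp only [hL, hR]
  exact sum_swap4 _

/-- the finite-dimensional double commutant theorem -/
theorem double_commutant (M : Subalgebra ℂ (Matrix n n ℂ))
    (hMstar : ∀ a ∈ M, star a ∈ M) (T : Matrix n n ℂ)
    (hT : T ∈ Subalgebra.centralizer ℂ
      ((Subalgebra.centralizer ℂ (M : Set (Matrix n n ℂ)) : Subalgebra ℂ (Matrix n n ℂ)) :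
        Set (Matrix n n ℂ))) :
    T ∈ M := by
  obtain ⟨p, h1, h2, h3⟩ := exists_proj (Subalgebra.toSubmodule M)
  have hcomm : ∀ a ∈ M, ∀ x, a * p x = p (a * x) := by
    intro a ha x
    have := h3 a 1 (fun w hw => by
        simpa using M.mul_mem (M.mul_mem ha hw) M.one_mem)
      (fun w hw => by
        have : aᴴ ∈ M := by rw [← Matrix.star_eq_conjTranspose] at *; exact hMstar a ha
        simpa using M.mul_mem (M.mul_mem this hw) M.one_mem) x
    simpa using this.symm
  have hblk : ∀ l l', blk p l l' ∈ Subalgebra.centralizer ℂ (M : Set (Matrix n n ℂ)) := by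
    intro l l'
    rw [Subalgebra.mem_centralizer_iff]
    intro a ha
    exact ((comm_iff p a).1 (hcomm a ha)) l l'
  have hTcomm : ∀ x, T * p x = p (T * x) := by
    apply (comm_iff p T).2
    intro l l'
    have := (Subalgebra.mem_centralizer_iff ℂ).1 hT (blk p l l') (hblk l l')
    exact this.symm
  have hp1 : p 1 = 1 := h2 1 M.one_mem
  have hTeq : T = p T := by
    simpa [hp1] using hTcomm 1
  rw [hTeq]
  exact h1 T

lemma phiM_tmul (M : Subalgebra ℂ (Matrix n n ℂ)) (x y : ↥M) (T : Matrix n n ℂ) :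
    PhiM M (x ⊗ₜ[ℂ] y) T = (x : Matrix n n ℂ) * T * (y : Matrix n n ℂ) := by
  simp [PhiM, Matrix.mul_assoc]

lemma phiM_one (M : Subalgebra ℂ (Matrix n n ℂ)) (z : ↥M ⊗[ℂ] ↥M) :
    PhiM M z 1 = (TensorProduct.lift (LinearMap.mul ℂ ↥M) z : Matrix n n ℂ) := by
  induction z using TensorProduct.induction_on with
  | zero => simp
  | tmul x y => simp [phiM_tmul]
  | add u v hu hv => simp only [map_add, LinearMap.add_apply, hu, hv, Subalgebra.coe_add]

lemma phiM_central (M : Subalgebra ℂ (Matrix n n ℂ)) (T : Matrix n n ℂ)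
    (hT : T ∈ Subalgebra.centralizer ℂ (M : Set (Matrix n n ℂ))) (z : ↥M ⊗[ℂ] ↥M) :
    PhiM M z T = T * (TensorProduct.lift (LinearMap.mul ℂ ↥M) z : Matrix n n ℂ) := by
  induction z using TensorProduct.induction_on with
  | zero => simp
  | tmul x y =>
    rw [phiM_tmul]
    have hx : (x : Matrix n n ℂ) * T = T * x :=
      (Subalgebra.mem_centralizer_iff ℂ).1 hT x x.2
    simp only [TensorProduct.lift.tmul, LinearMap.mul_apply', MulMemClass.coe_mul]
    rw [← Matrix.mul_assoc, hx, Matrix.mul_assoc]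
  | add u v hu hv =>
    simp only [map_add, LinearMap.add_apply, hu, hv, Subalgebra.coe_add, Matrix.mul_add]

end Aux

set_option synthInstance.maxHeartbeats 1000000 in
set_option maxHeartbeats 1000000 in
/-- a quantum graph `S` on a finite-dimensional von Neumann algebra
`M ⊆ B(H)` (an `M′`-bimodule) is reflexive (`M′ ⊆ S`) iff every `z ∈ M ⊗ M` in the
annihilator of `S` satisfies `m(z) = 0`, where `m` is the multiplication map. -/
theorem stmt_12 {n : Type*} [Fintype n] [DecidableEq n]
    (M : Subalgebra ℂ (Matrix n n ℂ)) (hMstar : ∀ a ∈ M, star a ∈ M)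
    (S : Submodule ℂ (Matrix n n ℂ))
    (hbim : ∀ a ∈ Subalgebra.centralizer ℂ (M : Set (Matrix n n ℂ)),
      ∀ b ∈ Subalgebra.centralizer ℂ (M : Set (Matrix n n ℂ)),
        ∀ T ∈ S, a * T * b ∈ S) :
    (∀ T ∈ Subalgebra.centralizer ℂ (M : Set (Matrix n n ℂ)), T ∈ S) ↔
      (∀ z : ↥M ⊗[ℂ] ↥M, (∀ T ∈ S, PhiM M z T = 0) → TensorProduct.lift (LinearMap.mul ℂ ↥M) z = 0) := by
  constructor
  · -- easy direction
    intro hS z hz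
    have h1 : PhiM M z 1 = 0 :=
      hz 1 (hS 1 ((Subalgebra.centralizer ℂ (M : Set (Matrix n n ℂ))).one_mem))
    have h2 := phiM_one M z
    rw [h1] at h2
    exact Subtype.ext h2.symm
  · -- hard direction
    intro h T₀ hT₀
    -- star-closure of the commutant
    have hMcstar : ∀ a ∈ Subalgebra.centralizer ℂ (M : Set (Matrix n n ℂ)),
        star a ∈ Subalgebra.centralizer ℂ (M : Set (Matrix n n ℂ)) := by
      intro a ha
      rw [Subalgebra.mem_centralizer_iff] at ha ⊢
      intro g hg
      have h1 : star g ∈ M := hMstar g hg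
      have h2 := ha (star g) h1
      calc g * star a = star (a * star g) := by simp
        _ = star (star g * a) := by rw [h2]
        _ = star a * g := by simp
    obtain ⟨p, h1, h2, h3⟩ := exists_proj S
    set Q : Matrix n n ℂ →ₗ[ℂ] Matrix n n ℂ := LinearMap.id - p with hQ
    have hQS : ∀ T ∈ S, Q T = 0 := by
      intro T hT
      simp [hQ, h2 T hT]
    have hQcomm : ∀ a ∈ Subalgebra.centralizer ℂ (M : Set (Matrix n n ℂ)),
        ∀ b ∈ Subalgebra.centralizer ℂ (M : Set (Matrix n n ℂ)),
        ∀ x, Q (a * x * b) = a * Q x * b := by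
      intro a ha b hb x
      have hp := h3 a b (fun w hw => hbim a ha b hb w hw)
        (fun w hw => by
          rw [← Matrix.star_eq_conjTranspose, ← Matrix.star_eq_conjTranspose]
          exact hbim _ (hMcstar a ha) _ (hMcstar b hb) w hw) x
      simp only [hQ, LinearMap.sub_apply, LinearMap.id_apply, hp]
      noncomm_ring
    have hQL : ∀ a ∈ Subalgebra.centralizer ℂ (M : Set (Matrix n n ℂ)),
        ∀ x, a * Q x = Q (a * x) := by
      intro a ha x
      have := hQcomm a ha 1 (Subalgebra.one_mem _) x
      simpa using this.symm
    have hQR : ∀ b ∈ Subalgebra.centralizer ℂ (M : Set (Matrix n n ℂ)),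
        ∀ x, Q x * b = Q (x * b) := by
      intro b hb x
      have := hQcomm 1 (Subalgebra.one_mem _) b hb x
      simpa using this.symm
    -- the blocks of Q are in M'' = M
    have hblkM : ∀ l l', blk Q l l' ∈ M := by
      intro l l'
      apply double_commutant M hMstar
      rw [Subalgebra.mem_centralizer_iff]
      intro a ha
      exact ((comm_iff Q a).1 (hQL a ha)) l l'
    have hblkRM : ∀ i j, blkR Q i j ∈ M := by
      intro i j
      apply double_commutant M hMstar
      rw [Subalgebra.mem_centralizer_iff]
      intro b hb
      exact ((comm_iffR Q b).1 (hQR b hb)) i j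
    -- a linear projection onto M
    obtain ⟨π, hπ1, hπ2, -⟩ := exists_proj (Subalgebra.toSubmodule M)
    -- the tensor z
    set z : ↥M ⊗[ℂ] ↥M :=
      ∑ k, ∑ l, (⟨blk Q l k, hblkM l k⟩ : ↥M) ⊗ₜ[ℂ]
        (⟨π (single k l 1), hπ1 _⟩ : ↥M) with hz
    have hzPhi : ∀ T, PhiM M z T = Q T := by
      intro T
      have : PhiM M z T = ∑ k, ∑ l, blk Q l k * T * π (single k l 1) := by
        rw [hz]
        simp only [map_sum, LinearMap.sum_apply]
        exact Finset.sum_congr rfl fun k _ => Finset.sum_congr rfl fun l _ => phiM_tmul ..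
      rw [this, claim4 Q π T]
      have : ∀ i j, π (blkR Q i j) = blkR Q i j := fun i j => hπ2 _ (hblkRM i j)
      simp only [this]
      exact (claim3 Q T).symm
    -- z annihilates S, hence m z = 0
    have hmz : TensorProduct.lift (LinearMap.mul ℂ ↥M) z = 0 := by
      apply h
      intro T hT
      rw [hzPhi]
      exact hQS T hT
    -- hence Q T₀ = 0
    have hQT₀ : Q T₀ = 0 := by
      rw [← hzPhi, phiM_central M T₀ hT₀ z, hmz]
      simp
    have : T₀ - p T₀ = 0 := by simpa [hQ] using hQT₀
    have hTp : T₀ = p T₀ := by linear_combination (norm := module) this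
    rw [hTp]
    exact h1 T₀
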